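/- Let h(x) = ∑_{k≥0} c_{2k+1} x^{2k+1} with c₁ > 0, c_{2k+1} ≤ 0 for k > 0, and ∑_k c_{2k+1} = 1. Then the coefficients d_{2k+1} of the compositional inverse of h satisfy 0 ≤ d_{2k+1} ≤ 1/(2k+1) for all k ≥ 0. -/

import Mathlib

open Real Set

namespace Stmt9Aux
open PowerSeries Finset


lemma sum_coeff_mul_le (A B : ℝ⟦X⟧) (hA : ∀ i, 0 ≤ coeff i A) (hB : ∀ i, 0 ≤ coeff i B)
    (M : ℕ) :
    ∑ i ∈ range M, coeff i (A * B) ≤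
      (∑ i ∈ range M, coeff i A) * (∑ i ∈ range M, coeff i B) := by
  have key : ∑ i ∈ range M, coeff i (A * B)
      = ∑ p ∈ (range M).biUnion (fun i => Finset.HasAntidiagonal.antidiagonal i),
          coeff p.1 A * coeff p.2 B := by
    rw [Finset.sum_biUnion]
    · simp [PowerSeries.coeff_mul]
    · intro x hx y hy hxy
      apply Finset.disjoint_left.2
      intro p hp hp2
      simp only [Finset.HasAntidiagonal.mem_antidiagonal] at hp hp2
      exact hxy (by rw [← hp, ← hp2])
  rw [key, Finset.sum_mul_sum, ← Finset.sum_product']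
  apply Finset.sum_le_sum_of_subset_of_nonneg
  · intro p hp
    simp only [Finset.mem_biUnion, Finset.HasAntidiagonal.mem_antidiagonal, Finset.mem_range] at hp
    obtain ⟨i, hi, hpi⟩ := hp
    simp only [Finset.mem_product, Finset.mem_range]
    omega
  · intro p _ _
    exact mul_nonneg (hA _) (hB _)

lemma coeff_inv_rec (S : ℝ⟦X⟧) (c0 : ℝ) (hc0 : 1 ≤ c0)
    (hconst : constantCoeff S = c0) (i : ℕ) :
    coeff i S⁻¹ = c0⁻¹ * ((if i = 0 then (1:ℝ) else 0) +
      ∑ j ∈ range i, (-(coeff (j+1) S)) * coeff (i-j-1) S⁻¹) := by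
  have hne : constantCoeff S ≠ 0 := by rw [hconst]; linarith
  have hSP : S * S⁻¹ = 1 := PowerSeries.mul_inv_cancel _ hne
  have h1 : coeff i (S * S⁻¹) = coeff i (1 : ℝ⟦X⟧) := by rw [hSP]
  rw [PowerSeries.coeff_mul, Finset.Nat.sum_antidiagonal_eq_sum_range_succ_mk,
    Finset.sum_range_succ'] at h1
  simp only [Nat.sub_zero, PowerSeries.coeff_one] at h1
  have h2 : coeff 0 S = c0 := by
    rw [← hconst, PowerSeries.coeff_zero_eq_constantCoeff]
  rw [h2] at h1
  have hc0ne : c0 ≠ 0 := by linarith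
  have h3 : ∑ j ∈ range i, (-(coeff (j+1) S)) * coeff (i-j-1) S⁻¹
      = -∑ x ∈ range i, coeff (x+1) S * coeff (i-(x+1)) S⁻¹ := by
    rw [← Finset.sum_neg_distrib]
    apply Finset.sum_congr rfl
    intro j hj
    have h4 : i - j - 1 = i - (j+1) := by omega
    rw [h4]; ring
  rw [h3]
  field_simp
  linarith

lemma inv_coeff_nonneg (S : ℝ⟦X⟧) (c0 : ℝ) (hc0 : 1 ≤ c0)
    (hconst : constantCoeff S = c0)
    (hneg : ∀ i : ℕ, 0 ≤ -(coeff (i+1) S)) :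
    ∀ i, 0 ≤ coeff i S⁻¹ := by
  intro i
  induction i using Nat.strong_induction_on with
  | _ i ih =>
    rw [coeff_inv_rec S c0 hc0 hconst i]
    apply mul_nonneg (by positivity)
    apply add_nonneg (by positivity)
    apply Finset.sum_nonneg
    intro j hj
    have hji : i - j - 1 < i := by simp only [Finset.mem_range] at hj; omega
    exact mul_nonneg (hneg j) (ih _ hji)

lemma inv_coeff_mass (S : ℝ⟦X⟧) (c0 : ℝ) (hc0 : 1 ≤ c0)
    (hconst : constantCoeff S = c0)
    (hneg : ∀ i : ℕ, 0 ≤ -(coeff (i+1) S))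
    (hmass : ∀ M : ℕ, ∑ i ∈ range M, (-(coeff (i+1) S)) ≤ c0 - 1) :
    ∀ M : ℕ, ∑ i ∈ range M, coeff i S⁻¹ ≤ 1 := by
  have hP := inv_coeff_nonneg S c0 hc0 hconst hneg
  intro M
  -- U: power series with coefficients -(coeff (j+1) S)
  set U : ℝ⟦X⟧ := PowerSeries.mk (fun j => -(coeff (j+1) S)) with hU
  have hUc : ∀ j, coeff j U = -(coeff (j+1) S) := fun j => PowerSeries.coeff_mk _ _
  set T := ∑ i ∈ range M, coeff i S⁻¹ with hT
  have hTnn : 0 ≤ T := Finset.sum_nonneg fun i _ => hP i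
  have key : c0 * T ≤ 1 + (c0 - 1) * T := by
    have expand : c0 * T = ∑ i ∈ range M, (c0 * coeff i S⁻¹) := by
      rw [Finset.mul_sum]
    have step : ∀ i : ℕ, c0 * coeff i S⁻¹ = (if i = 0 then (1:ℝ) else 0) +
        ∑ j ∈ range i, (-(coeff (j+1) S)) * coeff (i-j-1) S⁻¹ := by
      intro i
      rw [coeff_inv_rec S c0 hc0 hconst i, ← mul_assoc, mul_inv_cancel₀ (by linarith), one_mul]
    rw [expand]
    calc ∑ i ∈ range M, (c0 * coeff i S⁻¹)
        = ∑ i ∈ range M, ((if i = 0 then (1:ℝ) else 0) +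
            ∑ j ∈ range i, (-(coeff (j+1) S)) * coeff (i-j-1) S⁻¹) := by
          exact Finset.sum_congr rfl fun i _ => step i
      _ = (∑ i ∈ range M, (if i = 0 then (1:ℝ) else 0)) +
            ∑ i ∈ range M, ∑ j ∈ range i, (-(coeff (j+1) S)) * coeff (i-j-1) S⁻¹ := by
          rw [Finset.sum_add_distrib]
      _ ≤ 1 + (c0 - 1) * T := by
          gcongr
          · -- sum of indicator ≤ 1
            rcases Nat.eq_zero_or_pos M with hM | hM
            · simp [hM]
            · rw [Finset.sum_ite_eq' (range M) 0 (fun _ => (1:ℝ))]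
              simp [Finset.mem_range, hM]
          · -- double sum
            rcases Nat.eq_zero_or_pos M with hM | hM
            · simp [hM]
              exact mul_nonneg (by linarith) hTnn
            · obtain ⟨M', rfl⟩ : ∃ M', M = M' + 1 := ⟨M - 1, by omega⟩
              have reindex : ∑ i ∈ range (M'+1), ∑ j ∈ range i,
                  (-(coeff (j+1) S)) * coeff (i-j-1) S⁻¹
                  = ∑ i ∈ range M', coeff i (U * S⁻¹) := by
                rw [Finset.sum_range_succ']
                simp only [Finset.range_zero, Finset.sum_empty, add_zero]
                apply Finset.sum_congr rfl
                intro i _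
                rw [PowerSeries.coeff_mul, Finset.Nat.sum_antidiagonal_eq_sum_range_succ_mk]
                apply Finset.sum_congr rfl
                intro j hj
                simp only [Finset.mem_range] at hj
                rw [hUc]
                have hij : i + 1 - j - 1 = i - j := by omega
                rw [hij]
              rw [reindex]
              calc ∑ i ∈ range M', coeff i (U * S⁻¹)
                  ≤ (∑ i ∈ range M', coeff i U) * (∑ i ∈ range M', coeff i S⁻¹) := by
                    apply sum_coeff_mul_le
                    · intro i; rw [hUc]; exact hneg i
                    · exact hP
                _ ≤ (c0 - 1) * T := by
                    apply mul_le_mul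
                    · calc ∑ i ∈ range M', coeff i U
                          = ∑ i ∈ range M', (-(coeff (i+1) S)) := by
                            exact Finset.sum_congr rfl fun i _ => hUc i
                        _ ≤ c0 - 1 := hmass M'
                    · apply Finset.sum_le_sum_of_subset_of_nonneg
                      · exact Finset.range_subset_range.2 (by omega)
                      · intro i _ _; exact hP i
                    · exact Finset.sum_nonneg fun i _ => hP i
                    · linarith
  linarith

lemma pow_coeff_bounds (P : ℝ⟦X⟧) (h1 : ∀ i, 0 ≤ coeff i P)
    (h2 : ∀ M, ∑ i ∈ range M, coeff i P ≤ 1) (j : ℕ) :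
    (∀ i, 0 ≤ coeff i (P^j)) ∧ (∀ M, ∑ i ∈ range M, coeff i (P^j) ≤ 1) := by
  induction j with
  | zero =>
    constructor
    · intro i
      simp only [pow_zero, PowerSeries.coeff_one]
      split <;> norm_num
    · intro M
      simp only [pow_zero, PowerSeries.coeff_one]
      rcases Nat.eq_zero_or_pos M with hM | hM
      · simp [hM]
      · rw [Finset.sum_ite_eq' (range M) 0 (fun _ => (1:ℝ))]
        simp [Finset.mem_range, hM]
  | succ j ih =>
    obtain ⟨ihn, ihm⟩ := ih
    constructor
    · intro i
      rw [pow_succ, PowerSeries.coeff_mul]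
      apply Finset.sum_nonneg
      intro p _
      exact mul_nonneg (ihn _) (h1 _)
    · intro M
      rw [pow_succ]
      calc ∑ i ∈ range M, coeff i (P^j * P)
          ≤ (∑ i ∈ range M, coeff i (P^j)) * (∑ i ∈ range M, coeff i P) :=
            sum_coeff_mul_le _ _ ihn h1 M
        _ ≤ 1 * 1 := by
            apply mul_le_mul (ihm M) (h2 M) (Finset.sum_nonneg fun i _ => h1 i)
            norm_num
        _ = 1 := by norm_num


variable {S : ℝ⟦X⟧} {c0 : ℝ}

lemma pow_cancel (hc0 : c0 ≠ 0) (hconst : constantCoeff S = c0) (a b : ℕ) :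
    S ^ a * (S⁻¹) ^ (a + b) = (S⁻¹) ^ b := by
  have hSP : S * S⁻¹ = 1 := PowerSeries.mul_inv_cancel _ (by rw [hconst]; exact hc0)
  rw [pow_add, ← mul_assoc, ← mul_pow, hSP, one_pow, one_mul]

lemma X_pow_dvd_derivative {k : ℕ} {E : ℝ⟦X⟧} (hE : (X : ℝ⟦X⟧) ^ (k+1) ∣ E) :
    (X : ℝ⟦X⟧) ^ k ∣ d⁄dX ℝ E := by
  rw [PowerSeries.X_pow_dvd_iff] at hE ⊢
  intro m hm
  rw [PowerSeries.coeff_derivative, hE (m+1) (by omega), zero_mul]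

lemma L1 (hc0 : c0 ≠ 0) (hconst : constantCoeff S = c0) (r : ℕ) :
    coeff (2*r+2) ((d⁄dX ℝ (X * S)) * (S⁻¹) ^ (2*r+3)) = 0 := by
  set P := S⁻¹ with hPdef
  have hDH : d⁄dX ℝ (X * S) = X * (d⁄dX ℝ S) + S := by
    rw [Derivation.leibniz, PowerSeries.derivative_X, smul_eq_mul, smul_eq_mul, mul_one]
  have hSPpow : S * P ^ (2*r+3) = P ^ (2*r+2) := by
    have := pow_cancel hc0 hconst 1 (2*r+2)
    simpa [pow_one, show 1 + (2*r+2) = 2*r+3 from by omega] using this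
  have hDP : d⁄dX ℝ P = -(P^2 * d⁄dX ℝ S) := by
    rw [hPdef, PowerSeries.derivative_inv']
    ring
  have hDSP : (d⁄dX ℝ S) * P ^ (2*r+3) = -((d⁄dX ℝ P) * P ^ (2*r+1)) := by
    have h1 : P ^ (2*r+3) = P^2 * P^(2*r+1) := by ring
    rw [h1, hDP]
    ring
  have hkey : coeff (2*r+1) ((d⁄dX ℝ P) * P ^ (2*r+1)) = coeff (2*r+2) (P ^ (2*r+2)) := by
    have hlp : d⁄dX ℝ (P ^ (2*r+2)) = (2*r+2) • (P ^ (2*r+1) • d⁄dX ℝ P) := by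
      have := Derivation.leibniz_pow (d⁄dX ℝ) (a := P) (2*r+2)
      simpa using this
    have h2 := PowerSeries.coeff_derivative (P ^ (2*r+2)) (2*r+1)
    rw [hlp, show 2*r+1+1 = 2*r+2 from by omega] at h2
    rw [smul_eq_mul] at h2
    rw [map_nsmul] at h2
    rw [nsmul_eq_mul] at h2
    have h3 : ((2*r+2 : ℕ) : ℝ) ≠ 0 := by positivity
    rw [mul_comm ((d⁄dX ℝ) P)]
    apply mul_left_cancel₀ h3
    rw [h2]
    push_cast
    ring
  rw [hDH, add_mul, map_add, hSPpow]
  have h5 : coeff (2*r+2) (X * ((d⁄dX ℝ S) * P ^ (2*r+3)))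
      = coeff (2*r+1) ((d⁄dX ℝ S) * P ^ (2*r+3)) := by
    rw [show (2*r+2) = (2*r+1)+1 by ring, PowerSeries.coeff_succ_X_mul]
  rw [mul_assoc, h5, hDSP, map_neg, hkey]
  ring

lemma lagrange (hc0 : c0 ≠ 0) (hconst : constantCoeff S = c0) (d : ℕ → ℝ) (n : ℕ)
    (hA : (X : ℝ⟦X⟧) ^ (2*n+3) ∣
      ((∑ m ∈ range (n+1), PowerSeries.C (d m) * (X * S) ^ (2*m+1)) - X)) :
    ((2*n+1 : ℕ) : ℝ) * d n = coeff (2*n) ((S⁻¹) ^ (2*n+1)) := by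
  set P := S⁻¹ with hPdef
  set A : ℝ⟦X⟧ := ∑ m ∈ range (n+1), PowerSeries.C (d m) * (X * S) ^ (2*m+1) with hAdef
  -- step 1: X^(2n+2) ∣ D A - 1
  have h1 : (X : ℝ⟦X⟧) ^ (2*n+2) ∣ (d⁄dX ℝ A - 1) := by
    have hA' : (X : ℝ⟦X⟧) ^ ((2*n+2)+1) ∣ (A - X) := by
      rw [show (2*n+2)+1 = 2*n+3 from by omega]; exact hA
    have h1' := X_pow_dvd_derivative hA'
    rwa [map_sub, PowerSeries.derivative_X] at h1'
  -- step 2: coeff (2n) ((D A - 1) * P^(2n+1)) = 0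
  have h2 : coeff (2*n) ((d⁄dX ℝ A - 1) * P ^ (2*n+1)) = 0 := by
    obtain ⟨F, hF⟩ := h1
    rw [hF, mul_assoc]
    rw [PowerSeries.coeff_X_pow_mul']
    simp only [if_neg (by omega : ¬ 2*n+2 ≤ 2*n)]
  have h3 : coeff (2*n) ((d⁄dX ℝ A) * P ^ (2*n+1)) = coeff (2*n) (P ^ (2*n+1)) := by
    have := h2
    rw [sub_mul, one_mul, map_sub, sub_eq_zero] at this
    exact this
  -- step 3: compute coeff (2n) (D A * P^(2n+1))
  have h4 : coeff (2*n) ((d⁄dX ℝ A) * P ^ (2*n+1)) = ((2*n+1 : ℕ) : ℝ) * d n := by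
    have hDA : d⁄dX ℝ A = ∑ m ∈ range (n+1),
        PowerSeries.C (d m) * ((2*m+1) • ((X*S) ^ (2*m) * d⁄dX ℝ (X*S))) := by
      rw [hAdef, map_sum]
      apply Finset.sum_congr rfl
      intro m _
      rw [Derivation.leibniz, Derivation.leibniz_pow, PowerSeries.derivative_C]
      simp only [show 2*m+1-1 = 2*m from by omega, smul_zero, mul_zero, add_zero, smul_eq_mul]
    rw [hDA, Finset.sum_mul, map_sum]
    -- each term
    have hterm : ∀ m ∈ range (n+1),
        coeff (2*n) (PowerSeries.C (d m) * ((2*m+1) • ((X*S) ^ (2*m) * d⁄dX ℝ (X*S))) * P ^ (2*n+1))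
        = if m = n then ((2*n+1 : ℕ) : ℝ) * d n else 0 := by
      intro m hm
      simp only [Finset.mem_range] at hm
      have hmn : m ≤ n := by omega
      -- rearrange the product
      have hre : PowerSeries.C (d m) * ((2*m+1) • ((X*S) ^ (2*m) * d⁄dX ℝ (X*S))) * P ^ (2*n+1)
          = (2*m+1) • (PowerSeries.C (d m) * ((X:ℝ⟦X⟧) ^ (2*m) * ((d⁄dX ℝ (X*S)) * P ^ (2*(n-m)+1)))) := by
        rw [mul_pow]
        have hsp : S ^ (2*m) * P ^ (2*n+1) = P ^ (2*(n-m)+1) := by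
          have h5 : 2*m + (2*(n-m)+1) = 2*n+1 := by omega
          rw [← h5]
          exact pow_cancel hc0 hconst _ _
        simp only [nsmul_eq_mul]
        rw [← hsp]
        ring
      rw [hre, map_nsmul, PowerSeries.coeff_C_mul, nsmul_eq_mul]
      have hxp : coeff (2*n) ((X:ℝ⟦X⟧) ^ (2*m) * ((d⁄dX ℝ (X*S)) * P ^ (2*(n-m)+1)))
          = coeff (2*(n-m)) ((d⁄dX ℝ (X*S)) * P ^ (2*(n-m)+1)) := by
        have h6 : 2*n = 2*(n-m) + 2*m := by omega
        rw [h6, PowerSeries.coeff_X_pow_mul]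
      rw [hxp]
      have hcc : coeff 0 ((d⁄dX ℝ (X*S)) * P ^ (0+1)) = 1 := by
        rw [pow_one, PowerSeries.coeff_zero_eq_constantCoeff, map_mul]
        have hdc : constantCoeff (d⁄dX ℝ (X*S)) = c0 := by
          rw [← PowerSeries.coeff_zero_eq_constantCoeff, PowerSeries.coeff_derivative]
          rw [PowerSeries.coeff_succ_X_mul]
          rw [PowerSeries.coeff_zero_eq_constantCoeff, hconst]
          norm_num
        rw [hdc, hPdef, PowerSeries.constantCoeff_inv, hconst]
        field_simp
      rcases eq_or_lt_of_le hmn with heq | hlt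
      · subst heq
        rw [if_pos rfl]
        have e1 : 2*(m-m) = 0 := by omega
        have e2 : 2*(m-m)+1 = 0+1 := by omega
        rw [e2, e1, hcc]
        push_cast
        ring
      · have hne : m ≠ n := by omega
        rw [if_neg hne]
        obtain ⟨r, hr⟩ : ∃ r, n - m = r + 1 := ⟨n - m - 1, by omega⟩
        rw [hr]
        have : 2*(r+1) = 2*r+2 := by ring
        rw [this, show 2*r+2+1 = 2*r+3 from by omega]
        rw [L1 hc0 hconst r]
        ring
    rw [Finset.sum_congr rfl hterm, Finset.sum_ite_eq' (range (n+1)) n]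
    simp
  rw [← h4, h3]

lemma pow_diff_bound (B : ℝ) (j : ℕ) :
    ∀ a b : ℝ, |a| ≤ B → |b| ≤ B → |a ^ (j+1) - b ^ (j+1)| ≤ (j+1) * B ^ j * |a - b| := by
  induction j with
  | zero => intro a b _ _; simp
  | succ j ih =>
    intro a b ha hb
    have hB : 0 ≤ B := le_trans (abs_nonneg a) ha
    have key : a ^ (j+2) - b ^ (j+2) = a * (a ^ (j+1) - b ^ (j+1)) + b ^ (j+1) * (a - b) := by
      ring
    have t1 : |a * (a ^ (j+1) - b ^ (j+1))| ≤ B * ((j+1) * B ^ j * |a - b|) := by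
      rw [abs_mul]
      apply mul_le_mul ha (ih a b ha hb) (abs_nonneg _) hB
    have t2 : |b ^ (j+1) * (a - b)| ≤ B ^ (j+1) * |a - b| := by
      rw [abs_mul, abs_pow]
      apply mul_le_mul_of_nonneg_right (pow_le_pow_left₀ (abs_nonneg _) hb (j+1)) (abs_nonneg _)
    calc |a ^ (j+1+1) - b ^ (j+1+1)|
        ≤ |a * (a ^ (j+1) - b ^ (j+1))| + |b ^ (j+1) * (a - b)| := by
          rw [show j+1+1 = j+2 from rfl, key]; exact abs_add_le _ _
      _ ≤ B * ((j+1) * B ^ j * |a - b|) + B ^ (j+1) * |a - b| := add_le_add t1 t2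
      _ = ((j+1 : ℕ) + 1) * B ^ (j+1) * |a - b| := by
          push_cast
          rw [pow_succ]
          ring

lemma poly_coeff_eq_zero (N : ℕ) :
    ∀ (p : Polynomial ℝ) (Cb δ : ℝ), 0 < δ →
    (∀ x : ℝ, 0 < |x| → |x| < δ → |p.eval x| ≤ Cb * |x| ^ N) →
    ∀ j, j < N → p.coeff j = 0 := by
  induction N with
  | zero => intro p Cb δ hδ hb j hj; omega
  | succ N ih =>
    intro p Cb δ hδ hb
    have h0 : p.eval 0 = 0 := by
      have htends : Filter.Tendsto (fun x : ℝ => |p.eval x|) (nhdsWithin 0 {(0:ℝ)}ᶜ)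
          (nhds |p.eval 0|) :=
        (p.continuous.abs.tendsto 0).mono_left nhdsWithin_le_nhds
      have hzero : Filter.Tendsto (fun x : ℝ => Cb * |x| ^ (N+1)) (nhdsWithin 0 {(0:ℝ)}ᶜ)
          (nhds 0) := by
        apply Filter.Tendsto.mono_left _ nhdsWithin_le_nhds
        have h1 : Filter.Tendsto (fun x : ℝ => Cb * |x| ^ (N+1)) (nhds 0)
            (nhds (Cb * |(0:ℝ)| ^ (N+1))) :=
          ((continuous_const.mul (continuous_abs.pow (N+1))).tendsto 0)
        simpa using h1
      have hev : ∀ᶠ x in nhdsWithin (0:ℝ) {(0:ℝ)}ᶜ,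
          |p.eval x| ≤ Cb * |x| ^ (N+1) := by
        have hmem : ∀ᶠ x in nhdsWithin (0:ℝ) {(0:ℝ)}ᶜ, x ∈ ({(0:ℝ)}ᶜ : Set ℝ) :=
          self_mem_nhdsWithin
        have hsmall : ∀ᶠ x in nhdsWithin (0:ℝ) {(0:ℝ)}ᶜ, |x| < δ := by
          apply Filter.Eventually.filter_mono nhdsWithin_le_nhds
          have : Metric.ball (0:ℝ) δ ∈ nhds (0:ℝ) := Metric.ball_mem_nhds _ hδ
          apply Filter.eventually_of_mem this
          intro x hx
          simpa [Real.dist_eq] using hx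
        filter_upwards [hmem, hsmall] with x hx1 hx2
        apply hb x _ hx2
        simp only [Set.mem_compl_iff, Set.mem_singleton_iff] at hx1
        simpa [abs_pos] using hx1
      have hle : |p.eval 0| ≤ 0 := le_of_tendsto_of_tendsto htends hzero hev
      exact abs_eq_zero.1 (le_antisymm hle (abs_nonneg _))
    have hc0 : p.coeff 0 = 0 := by rwa [Polynomial.coeff_zero_eq_eval_zero]
    obtain ⟨q, rfl⟩ := Polynomial.X_dvd_iff.2 hc0
    have hq : ∀ x : ℝ, 0 < |x| → |x| < δ → |q.eval x| ≤ Cb * |x| ^ N := by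
      intro x hx hxδ
      have hb' := hb x hx hxδ
      rw [Polynomial.eval_mul, Polynomial.eval_X, abs_mul, pow_succ] at hb'
      have h3 : |x| * |q.eval x| ≤ |x| * (Cb * |x| ^ N) := by
        calc |x| * |q.eval x| ≤ Cb * (|x| ^ N * |x|) := hb'
          _ = |x| * (Cb * |x| ^ N) := by ring
      exact (mul_le_mul_iff_right₀ hx).1 h3
    intro j hj
    match j with
    | 0 => rw [Polynomial.coeff_zero_eq_eval_zero]; exact h0
    | (i+1) =>
      rw [Polynomial.coeff_X_mul]
      exact ih q Cb δ hδ hq i (by omega)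

lemma bound_of_hasSum (f : ℕ → ℝ) (a : ℝ) (hf : HasSum f a) :
    ∃ K : ℝ, 0 < K ∧ ∀ m, |f m| ≤ K := by
  have h1 : Filter.Tendsto (fun m => |f m|) Filter.atTop (nhds 0) := by
    have := hf.summable.tendsto_atTop_zero
    have h2 := this.abs
    simpa using h2
  obtain ⟨K0, hK0⟩ := h1.bddAbove_range
  refine ⟨K0 + 1, ?_, ?_⟩
  · have : |f 0| ≤ K0 := hK0 ⟨0, rfl⟩
    have := abs_nonneg (f 0)
    linarith
  · intro m
    have : |f m| ≤ K0 := hK0 ⟨m, rfl⟩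
    linarith


lemma abs_tsum_le' {f : ℕ → ℝ} (hf : Summable fun i => |f i|) :
    |∑' i, f i| ≤ ∑' i, |f i| := by
  have h1 : Summable fun i => ‖f i‖ := by simpa [Real.norm_eq_abs] using hf
  have := norm_tsum_le_tsum_norm h1
  simpa [Real.norm_eq_abs] using this

lemma sum_pair (g : ℕ → ℝ) (M : ℕ) :
    ∑ i ∈ range (2*M), g i = ∑ j ∈ range M, (g (2*j) + g (2*j+1)) := by
  induction M with
  | zero => simp
  | succ M ih =>
    have e : 2*(M+1) = (2*M)+1+1 := by ring
    rw [e, Finset.sum_range_succ, Finset.sum_range_succ, ih, Finset.sum_range_succ]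
    ring

end Stmt9Aux

set_option maxHeartbeats 1600000 in
open Stmt9Aux PowerSeries in
/-- Let h(x) = ∑ c_{2k+1} x^{2k+1} with c₁ > 0, c_{2k+1} ≤ 0 for k > 0 and
∑ c_{2k+1} = 1, and let ∑ d_{2k+1} x^{2k+1} be the compositional inverse of h
(i.e. the d-series applied to h(x) sums back to x near 0). Then
0 ≤ d_{2k+1} ≤ 1/(2k+1) for all k ≥ 0. -/
theorem stmt_9 (h : ℝ → ℝ) (c d : ℕ → ℝ)
    (hc0 : 0 < c 0) (hc : ∀ k : ℕ, 0 < k → c k ≤ 0) (hc1 : HasSum c 1)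
    (hsum : ∀ x ∈ Ioo (-1 : ℝ) 1, HasSum (fun k : ℕ => c k * x ^ (2 * k + 1)) (h x))
    (hinv : ∃ ε > (0 : ℝ), ∀ x : ℝ, |x| < ε →
      HasSum (fun k : ℕ => d k * (h x) ^ (2 * k + 1)) x) :
    ∀ k : ℕ, 0 ≤ d k ∧ d k ≤ 1 / (2 * k + 1) := by
  classical
  obtain ⟨ε, hε, hinv'⟩ := hinv
  have hsummc : Summable c := hc1.summable
  have sabs : Summable (fun k => |c k|) := hsummc.abs
  have hsum1 : (∑ i ∈ Finset.range 1, c i) + ∑' i, c (i+1) = 1 := by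
    rw [Summable.sum_add_tsum_nat_add 1 hsummc, hc1.tsum_eq]
  have htail : ∑' i, c (i+1) = 1 - c 0 := by
    rw [Finset.sum_range_one] at hsum1; linarith
  have hsumtail : Summable (fun i => c (i+1)) := (summable_nat_add_iff 1).2 hsummc
  have hc0ge1 : (1:ℝ) ≤ c 0 := by
    have htn : ∑' i, c (i+1) ≤ 0 := tsum_nonpos (fun i => hc (i+1) (by omega))
    rw [htail] at htn; linarith
  have hc0ne : c 0 ≠ 0 := by linarith
  have htailneg : ∑' i, -(c (i+1)) = c 0 - 1 := by rw [tsum_neg, htail]; ring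
  have hsumtailneg : Summable (fun i => -(c (i+1))) := hsumtail.neg
  -- the power series S
  set S : ℝ⟦X⟧ := PowerSeries.mk (fun j => if Even j then c (j/2) else 0) with hSdef
  have hScoeff : ∀ j, coeff j S = if Even j then c (j/2) else 0 := by
    intro j; rw [hSdef, coeff_mk]
  have hSc : constantCoeff S = c 0 := by
    rw [← PowerSeries.coeff_zero_eq_constantCoeff, hScoeff]; norm_num
  have hnegS : ∀ i : ℕ, 0 ≤ -(coeff (i+1) S) := by
    intro i; rw [hScoeff]
    split_ifs with he
    · have hi2 : 0 < (i+1)/2 := by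
        rcases he with ⟨t, ht⟩; omega
      have := hc _ hi2; linarith
    · simp
  have hmassS : ∀ M : ℕ, ∑ i ∈ Finset.range M, (-(coeff (i+1) S)) ≤ c 0 - 1 := by
    intro M
    have h1 : ∑ i ∈ Finset.range M, (-(coeff (i+1) S))
        ≤ ∑ i ∈ Finset.range (2*M), (-(coeff (i+1) S)) := by
      apply Finset.sum_le_sum_of_subset_of_nonneg
      · exact Finset.range_subset_range.2 (by omega)
      · intro i _ _; exact hnegS i
    have h2 : ∑ i ∈ Finset.range (2*M), (-(coeff (i+1) S))
        = ∑ j ∈ Finset.range M, (-(c (j+1))) := by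
      rw [sum_pair]
      apply Finset.sum_congr rfl
      intro j _
      have ha : coeff (2*j+1) S = 0 := by
        rw [hScoeff, if_neg]
        intro hev
        rcases hev with ⟨t, ht⟩; omega
      have hb : coeff (2*j+1+1) S = c (j+1) := by
        rw [hScoeff, if_pos ⟨j+1, by ring⟩]
        congr 1; omega
      rw [ha, hb]; ring
    have h3 : ∑ j ∈ Finset.range M, (-(c (j+1))) ≤ c 0 - 1 := by
      have hle := Summable.sum_le_tsum (Finset.range M)
        (fun i _ => by have := hc (i+1) (by omega); linarith) hsumtailneg
      rw [htailneg] at hle; exact hle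
    linarith
  -- analytic preliminaries
  set cb : ℝ := ∑' k, |c k| with hcbdef
  have hcbnn : 0 ≤ cb := tsum_nonneg (fun _ => abs_nonneg _)
  set cb' : ℝ := max cb 1 with hcb'def
  have hcb1 : (1:ℝ) ≤ cb' := le_max_right _ _
  have hcbcb : cb ≤ cb' := le_max_left _ _
  have hcb'pos : (0:ℝ) < cb' := by linarith
  set x0 : ℝ := min (ε/2) (1/2) with hx0def
  have hx0pos : 0 < x0 := lt_min (by linarith) (by norm_num)
  have hx0le : x0 ≤ 1/2 := min_le_right _ _
  have hx0eps : x0 < ε := lt_of_le_of_lt (min_le_left _ _) (by linarith)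
  have hx0mem : x0 ∈ Ioo (-1:ℝ) 1 := ⟨by linarith, by linarith⟩
  have hhx0 : HasSum (fun k => c k * x0^(2*k+1)) (h x0) := hsum x0 hx0mem
  have hx0h : x0 ≤ h x0 := by
    have hg : HasSum (fun k : ℕ => c k * x0) x0 := by
      simpa using hc1.mul_right x0
    apply hasSum_le _ hg hhx0
    intro k
    rcases Nat.eq_zero_or_pos k with rfl | hk
    · norm_num
    · have hle : x0^(2*k+1) ≤ x0 := by
        calc x0^(2*k+1) ≤ x0^1 :=
              pow_le_pow_of_le_one (le_of_lt hx0pos) (by linarith) (by omega)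
          _ = x0 := pow_one x0
      exact mul_le_mul_of_nonpos_left hle (hc k hk)
  have hy0pos : 0 < h x0 := lt_of_lt_of_le hx0pos hx0h
  set y0 : ℝ := h x0 with hy0def
  obtain ⟨K, hKpos, hK⟩ := bound_of_hasSum _ _ (hinv' x0 (by rwa [abs_of_pos hx0pos]))
  have hhb : ∀ x : ℝ, |x| < 1 → |h x| ≤ cb' * |x| := by
    intro x hx
    have hmem : x ∈ Ioo (-1:ℝ) 1 := by
      rcases abs_lt.1 hx with ⟨u, v⟩; exact ⟨u, v⟩
    have hs := hsum x hmem
    have hterm : ∀ k : ℕ, |c k * x^(2*k+1)| ≤ |c k| * |x| := by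
      intro k
      rw [abs_mul, abs_pow]
      apply mul_le_mul_of_nonneg_left _ (abs_nonneg _)
      calc |x|^(2*k+1) ≤ |x|^1 :=
            pow_le_pow_of_le_one (abs_nonneg x) (le_of_lt hx) (by omega)
        _ = |x| := pow_one _
    have hsablex : Summable (fun k => |c k| * |x|) := sabs.mul_right _
    have habs : Summable (fun k => |c k * x^(2*k+1)|) :=
      Summable.of_nonneg_of_le (fun _ => abs_nonneg _) hterm hsablex
    rw [← hs.tsum_eq]
    calc |∑' k, c k * x^(2*k+1)| ≤ ∑' k, |c k * x^(2*k+1)| := abs_tsum_le' habs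
      _ ≤ ∑' k, |c k| * |x| := Summable.tsum_le_tsum hterm habs hsablex
      _ = cb * |x| := by rw [tsum_mul_right]
      _ ≤ cb' * |x| := mul_le_mul_of_nonneg_right hcbcb (abs_nonneg _)
  intro n
  set N : ℕ := 2*n+3 with hNdef
  set Q : Polynomial ℝ :=
    ∑ j ∈ Finset.range (n+1), Polynomial.C (c j) * Polynomial.X^(2*j+1) with hQdef
  have hQeval : ∀ x : ℝ, Q.eval x = ∑ j ∈ Finset.range (n+1), c j * x^(2*j+1) := by
    intro x
    rw [hQdef, Polynomial.eval_finset_sum]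
    apply Finset.sum_congr rfl
    intro j _
    simp
  have hQcoeff : ∀ j, Q.coeff j
      = ∑ k ∈ Finset.range (n+1), (if j = 2*k+1 then c k else 0) := by
    intro j
    rw [hQdef, Polynomial.finset_sum_coeff]
    apply Finset.sum_congr rfl
    intro k _
    rw [Polynomial.coeff_C_mul, Polynomial.coeff_X_pow]
    split_ifs <;> simp
  have hQb : ∀ x : ℝ, |x| ≤ 1 → |Q.eval x| ≤ cb' * |x| := by
    intro x hx
    rw [hQeval]
    calc |∑ j ∈ Finset.range (n+1), c j * x^(2*j+1)|
        ≤ ∑ j ∈ Finset.range (n+1), |c j * x^(2*j+1)| := Finset.abs_sum_le_sum_abs _ _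
      _ ≤ ∑ j ∈ Finset.range (n+1), |c j| * |x| := by
          apply Finset.sum_le_sum
          intro j _
          rw [abs_mul, abs_pow]
          apply mul_le_mul_of_nonneg_left _ (abs_nonneg _)
          calc |x|^(2*j+1) ≤ |x|^1 := pow_le_pow_of_le_one (abs_nonneg x) hx (by omega)
            _ = |x| := pow_one _
      _ = (∑ j ∈ Finset.range (n+1), |c j|) * |x| := by rw [Finset.sum_mul]
      _ ≤ cb * |x| := mul_le_mul_of_nonneg_right
            (Summable.sum_le_tsum _ (fun i _ => abs_nonneg _) sabs) (abs_nonneg _)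
      _ ≤ cb' * |x| := mul_le_mul_of_nonneg_right hcbcb (abs_nonneg _)
  set δ : ℝ := min x0 (y0/(2*cb')) with hδdef
  have hδpos : 0 < δ := lt_min hx0pos (by positivity)
  have hδx0 : δ ≤ x0 := min_le_left _ _
  -- the polynomial whose small coefficients vanish
  have hcoeffA : ∀ j, j < N →
      (((∑ m ∈ Finset.range (n+1), Polynomial.C (d m) * Q^(2*m+1)) - Polynomial.X).coeff j) = 0 := by
    apply poly_coeff_eq_zero N _
      ((∑ m ∈ Finset.range (n+1), |d m| * (2*m+1) * cb'^(2*m)) * cb + 2*K*(cb'/y0)^N) δ hδpos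
    intro x hxpos hxδ
    have hx1 : |x| < 1 := by
      have : |x| < x0 := lt_of_lt_of_le hxδ hδx0
      linarith
    have hxle1 : |x| ≤ 1 := le_of_lt hx1
    have hxeps : |x| < ε := by
      have : |x| < x0 := lt_of_lt_of_le hxδ hδx0
      linarith
    have hmem : x ∈ Ioo (-1:ℝ) 1 := by rcases abs_lt.1 hx1 with ⟨u, v⟩; exact ⟨u, v⟩
    have hhxb : |h x| ≤ cb' * |x| := hhb x hx1
    have hhxy : |h x| ≤ y0 / 2 := by
      calc |h x| ≤ cb' * |x| := hhxb
        _ ≤ cb' * (y0/(2*cb')) :=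
            mul_le_mul_of_nonneg_left
              (le_of_lt (lt_of_lt_of_le hxδ (min_le_right _ _))) (le_of_lt hcb'pos)
        _ = cb' * y0 / (2*cb') := (mul_div_assoc _ _ _).symm
        _ = y0/2 := by
            rw [div_eq_div_iff (by positivity) (by norm_num : (2:ℝ) ≠ 0)]
            ring
    -- Estimate 1 : tail of the c-series
    have hfs := hsum x hmem
    have hfsummable := hfs.summable
    have hE1 : |h x - Q.eval x| ≤ cb * |x|^N := by
      have hsplit := Summable.sum_add_tsum_nat_add (n+1) hfsummable
      have hteq := hfs.tsum_eq
      have he : h x - Q.eval x = ∑' i, c (i+(n+1)) * x^(2*(i+(n+1))+1) := by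
        rw [hQeval]; linarith
      have hterm : ∀ i : ℕ, |c (i+(n+1)) * x^(2*(i+(n+1))+1)| ≤ |c (i+(n+1))| * |x|^N := by
        intro i
        rw [abs_mul, abs_pow]
        apply mul_le_mul_of_nonneg_left _ (abs_nonneg _)
        exact pow_le_pow_of_le_one (abs_nonneg x) hxle1 (by omega)
      have hsums : Summable (fun i => |c (i+(n+1))| * |x|^N) :=
        (((summable_nat_add_iff (n+1)).2 sabs).mul_right _)
      have habs : Summable (fun i => |c (i+(n+1)) * x^(2*(i+(n+1))+1)|) :=
        Summable.of_nonneg_of_le (fun _ => abs_nonneg _) hterm hsums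
      have htailcb : ∑' i, |c (i+(n+1))| ≤ cb := by
        have := Summable.sum_add_tsum_nat_add (n+1) sabs
        have hfr : 0 ≤ ∑ i ∈ Finset.range (n+1), |c i| :=
          Finset.sum_nonneg (fun _ _ => abs_nonneg _)
        linarith
      rw [he]
      calc |∑' i, c (i+(n+1)) * x^(2*(i+(n+1))+1)|
          ≤ ∑' i, |c (i+(n+1)) * x^(2*(i+(n+1))+1)| := abs_tsum_le' habs
        _ ≤ ∑' i, |c (i+(n+1))| * |x|^N := Summable.tsum_le_tsum hterm habs hsums
        _ = (∑' i, |c (i+(n+1))|) * |x|^N := tsum_mul_right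
        _ ≤ cb * |x|^N := mul_le_mul_of_nonneg_right htailcb (by positivity)
    -- Estimate 2 : tail of the d-series
    have hE2 : |(∑ m ∈ Finset.range (n+1), d m * (h x)^(2*m+1)) - x|
        ≤ (2*K*(cb'/y0)^N) * |x|^N := by
      have hgs := hinv' x hxeps
      have hgsummable := hgs.summable
      have hgsplit := Summable.sum_add_tsum_nat_add (n+1) hgsummable
      have hgteq := hgs.tsum_eq
      set tt : ℝ := |h x| / y0 with httdef
      have htt0 : 0 ≤ tt := div_nonneg (abs_nonneg _) (le_of_lt hy0pos)
      have htt : tt ≤ 1/2 := by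
        rw [httdef, div_le_iff₀ hy0pos]
        linarith
      have htty : tt * y0 = |h x| := div_mul_cancel₀ _ (ne_of_gt hy0pos)
      have hterm : ∀ i : ℕ, |d (i+(n+1)) * (h x)^(2*(i+(n+1))+1)|
          ≤ (K * tt^N) * (tt^2)^i := by
        intro i
        have e1 : |d (i+(n+1)) * (h x)^(2*(i+(n+1))+1)|
            = |d (i+(n+1))| * y0^(2*(i+(n+1))+1) * tt^(2*(i+(n+1))+1) := by
          rw [abs_mul, abs_pow, ← htty, mul_pow]
          ring
        have e2 : |d (i+(n+1))| * y0^(2*(i+(n+1))+1) ≤ K := by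
          have := hK (i+(n+1))
          rwa [abs_mul, abs_pow, abs_of_pos hy0pos] at this
        have e3 : tt^(2*(i+(n+1))+1) = tt^N * (tt^2)^i := by
          rw [← pow_mul, ← pow_add]
          congr 1
          omega
        rw [e1, e3]
        calc |d (i+(n+1))| * y0^(2*(i+(n+1))+1) * (tt^N * (tt^2)^i)
            ≤ K * (tt^N * (tt^2)^i) := by
              apply mul_le_mul_of_nonneg_right e2 (by positivity)
          _ = (K * tt^N) * (tt^2)^i := by ring
      have htt21 : tt^2 < 1 := by nlinarith
      have hgeow : Summable (fun i : ℕ => (K * tt^N) * (tt^2)^i) :=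
        (summable_geometric_of_lt_one (by positivity) htt21).mul_left _
      have habs : Summable (fun i => |d (i+(n+1)) * (h x)^(2*(i+(n+1))+1)|) :=
        Summable.of_nonneg_of_le (fun _ => abs_nonneg _) hterm hgeow
      have he : (∑ m ∈ Finset.range (n+1), d m * (h x)^(2*m+1)) - x
          = -(∑' i, d (i+(n+1)) * (h x)^(2*(i+(n+1))+1)) := by
        linarith
      rw [he, abs_neg]
      calc |∑' i, d (i+(n+1)) * (h x)^(2*(i+(n+1))+1)|
          ≤ ∑' i, |d (i+(n+1)) * (h x)^(2*(i+(n+1))+1)| := abs_tsum_le' habs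
        _ ≤ ∑' i, (K * tt^N) * (tt^2)^i := Summable.tsum_le_tsum hterm habs hgeow
        _ = (K * tt^N) * (1 - tt^2)⁻¹ := by
            rw [tsum_mul_left, tsum_geometric_of_lt_one (by positivity) htt21]
        _ ≤ (K * tt^N) * 2 := by
            apply mul_le_mul_of_nonneg_left _ (by positivity)
            have h34 : (1:ℝ)/2 ≤ 1 - tt^2 := by nlinarith
            calc (1 - tt^2)⁻¹ ≤ ((1:ℝ)/2)⁻¹ := by
                  apply inv_anti₀ (by norm_num) h34
              _ = 2 := by norm_num
        _ ≤ (2*K*(cb'/y0)^N) * |x|^N := by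
            have httb : tt ≤ (cb'/y0) * |x| := by
              rw [httdef, div_le_iff₀ hy0pos]
              calc |h x| ≤ cb' * |x| := hhxb
                _ = cb' / y0 * |x| * y0 := by field_simp
            have : tt^N ≤ ((cb'/y0) * |x|)^N := pow_le_pow_left₀ htt0 httb N
            calc (K * tt^N) * 2 ≤ (K * ((cb'/y0) * |x|)^N) * 2 := by nlinarith
              _ = (2*K*(cb'/y0)^N) * |x|^N := by rw [mul_pow]; ring
    -- Estimate 3 : swapping h for Q in the partial sum
    have hQx1 : |Q.eval x| ≤ cb' := by
      calc |Q.eval x| ≤ cb' * |x| := hQb x hxle1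
        _ ≤ cb' * 1 := mul_le_mul_of_nonneg_left hxle1 (le_of_lt hcb'pos)
        _ = cb' := mul_one _
    have hhx1 : |h x| ≤ cb' := by
      calc |h x| ≤ cb' * |x| := hhxb
        _ ≤ cb' * 1 := mul_le_mul_of_nonneg_left hxle1 (le_of_lt hcb'pos)
        _ = cb' := mul_one _
    have hE3 : |(∑ m ∈ Finset.range (n+1), d m * (Q.eval x)^(2*m+1))
        - (∑ m ∈ Finset.range (n+1), d m * (h x)^(2*m+1))|
        ≤ (∑ m ∈ Finset.range (n+1), |d m| * (2*m+1) * cb'^(2*m)) * (cb * |x|^N) := by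
      rw [← Finset.sum_sub_distrib]
      calc |∑ m ∈ Finset.range (n+1), (d m * (Q.eval x)^(2*m+1) - d m * (h x)^(2*m+1))|
          ≤ ∑ m ∈ Finset.range (n+1), |d m * (Q.eval x)^(2*m+1) - d m * (h x)^(2*m+1)| :=
            Finset.abs_sum_le_sum_abs _ _
        _ ≤ ∑ m ∈ Finset.range (n+1), (|d m| * (2*m+1) * cb'^(2*m)) * (cb * |x|^N) := by
            apply Finset.sum_le_sum
            intro m _
            have hpd := pow_diff_bound cb' (2*m) (Q.eval x) (h x) hQx1 hhx1
            push_cast at hpd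
            have e1 : d m * (Q.eval x)^(2*m+1) - d m * (h x)^(2*m+1)
                = d m * ((Q.eval x)^(2*m+1) - (h x)^(2*m+1)) := by ring
            rw [e1, abs_mul]
            have e2 : |Q.eval x - h x| ≤ cb * |x|^N := by
              rw [abs_sub_comm]; exact hE1
            calc |d m| * |(Q.eval x)^(2*m+1) - (h x)^(2*m+1)|
                ≤ |d m| * ((2*m+1) * cb'^(2*m) * |Q.eval x - h x|) :=
                  mul_le_mul_of_nonneg_left hpd (abs_nonneg _)
              _ ≤ |d m| * ((2*m+1) * cb'^(2*m) * (cb * |x|^N)) := by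
                  apply mul_le_mul_of_nonneg_left _ (abs_nonneg _)
                  apply mul_le_mul_of_nonneg_left e2 (by positivity)
              _ = (|d m| * (2*m+1) * cb'^(2*m)) * (cb * |x|^N) := by ring
        _ = (∑ m ∈ Finset.range (n+1), |d m| * (2*m+1) * cb'^(2*m)) * (cb * |x|^N) := by
            rw [Finset.sum_mul]
    -- put the estimates together
    have heval : ((∑ m ∈ Finset.range (n+1), Polynomial.C (d m) * Q^(2*m+1))
        - Polynomial.X : Polynomial ℝ).eval x
        = (∑ m ∈ Finset.range (n+1), d m * (Q.eval x)^(2*m+1)) - x := by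
      rw [Polynomial.eval_sub, Polynomial.eval_X, Polynomial.eval_finset_sum]
      congr 1
      apply Finset.sum_congr rfl
      intro m _
      simp
    rw [heval]
    have htri : |(∑ m ∈ Finset.range (n+1), d m * (Q.eval x)^(2*m+1)) - x|
        ≤ |(∑ m ∈ Finset.range (n+1), d m * (Q.eval x)^(2*m+1))
            - (∑ m ∈ Finset.range (n+1), d m * (h x)^(2*m+1))|
          + |(∑ m ∈ Finset.range (n+1), d m * (h x)^(2*m+1)) - x| := by
      have e : (∑ m ∈ Finset.range (n+1), d m * (Q.eval x)^(2*m+1)) - x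
          = ((∑ m ∈ Finset.range (n+1), d m * (Q.eval x)^(2*m+1))
            - (∑ m ∈ Finset.range (n+1), d m * (h x)^(2*m+1)))
          + ((∑ m ∈ Finset.range (n+1), d m * (h x)^(2*m+1)) - x) := by ring
      rw [e]; exact abs_add_le _ _
    calc |(∑ m ∈ Finset.range (n+1), d m * (Q.eval x)^(2*m+1)) - x|
        ≤ _ + _ := htri
      _ ≤ (∑ m ∈ Finset.range (n+1), |d m| * (2*m+1) * cb'^(2*m)) * (cb * |x|^N)
          + (2*K*(cb'/y0)^N) * |x|^N := add_le_add hE3 hE2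
      _ = ((∑ m ∈ Finset.range (n+1), |d m| * (2*m+1) * cb'^(2*m)) * cb
          + 2*K*(cb'/y0)^N) * |x|^N := by ring
  -- transfer to power series : X^N divides the formal sum minus X
  have hQdvdS : (X : ℝ⟦X⟧)^N ∣ ((X * S) - (Q : ℝ⟦X⟧)) := by
    rw [PowerSeries.X_pow_dvd_iff]
    intro j hj
    rw [map_sub, Polynomial.coeff_coe]
    rw [sub_eq_zero]
    match j, hj with
    | 0, hj =>
      have hl : coeff 0 ((X : ℝ⟦X⟧) * S) = 0 := by
        rw [PowerSeries.coeff_zero_eq_constantCoeff, map_mul, PowerSeries.constantCoeff_X,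
          zero_mul]
      rw [hl, hQcoeff]
      rw [eq_comm]
      apply Finset.sum_eq_zero
      intro k _
      rw [if_neg (by omega)]
    | (i+1), hj =>
      rw [PowerSeries.coeff_succ_X_mul, hScoeff, hQcoeff]
      rcases Nat.even_or_odd i with he | ho
      · obtain ⟨t, rfl⟩ := he
        rw [if_pos ⟨t, rfl⟩]
        have ht2 : (t+t)/2 = t := by omega
        rw [ht2, eq_comm,
          Finset.sum_eq_single_of_mem t (Finset.mem_range.2 (by omega))
            (fun k _ hk => if_neg (by omega)),
          if_pos (by omega)]
      · obtain ⟨t, rfl⟩ := ho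
        rw [if_neg (by rintro ⟨u, hu⟩; omega)]
        rw [eq_comm]
        apply Finset.sum_eq_zero
        intro k _
        rw [if_neg (by omega)]
  have hdvdmain : (X : ℝ⟦X⟧)^(2*n+3) ∣
      ((∑ m ∈ Finset.range (n+1), PowerSeries.C (d m) * ((X:ℝ⟦X⟧) * S)^(2*m+1)) - X) := by
    rw [PowerSeries.X_pow_dvd_iff]
    intro j hj
    have hjN : j < N := hj
    have hpows : ∀ m : ℕ, coeff j (((X:ℝ⟦X⟧) * S)^(2*m+1)) = (Q^(2*m+1)).coeff j := by
      intro m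
      have hd := dvd_trans hQdvdS (sub_dvd_pow_sub_pow ((X:ℝ⟦X⟧) * S) (↑Q) (2*m+1))
      have hz := (PowerSeries.X_pow_dvd_iff.1 hd) j hjN
      rw [map_sub, sub_eq_zero] at hz
      rw [hz, ← Polynomial.coe_pow, Polynomial.coeff_coe]
    have hpoly := hcoeffA j hjN
    rw [Polynomial.coeff_sub, sub_eq_zero, Polynomial.finset_sum_coeff] at hpoly
    rw [map_sub, map_sum, sub_eq_zero]
    calc ∑ m ∈ Finset.range (n+1), coeff j (PowerSeries.C (d m) * ((X:ℝ⟦X⟧) * S)^(2*m+1))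
        = ∑ m ∈ Finset.range (n+1), d m * (Q^(2*m+1)).coeff j := by
          apply Finset.sum_congr rfl
          intro m _
          rw [PowerSeries.coeff_C_mul, hpows m]
      _ = (Polynomial.X : Polynomial ℝ).coeff j := by
          rw [← hpoly]
          apply Finset.sum_congr rfl
          intro m _
          rw [Polynomial.coeff_C_mul]
      _ = coeff j (X : ℝ⟦X⟧) := by
          rw [Polynomial.coeff_X, PowerSeries.coeff_X]
          rcases eq_or_ne j 1 with rfl | hj1
          · simp
          · rw [if_neg hj1, if_neg (by omega)]
  -- apply the formal Lagrange machinery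
  have hlag := lagrange hc0ne hSc d n hdvdmain
  have hnn := inv_coeff_nonneg S (c 0) hc0ge1 hSc hnegS
  have hms := inv_coeff_mass S (c 0) hc0ge1 hSc hnegS hmassS
  obtain ⟨hpn, hpm⟩ := pow_coeff_bounds (S⁻¹) hnn hms (2*n+1)
  have h01 : 0 ≤ coeff (2*n) ((S⁻¹)^(2*n+1)) := hpn _
  have h02 : coeff (2*n) ((S⁻¹)^(2*n+1)) ≤ 1 := by
    have hsum21 := hpm (2*n+1)
    have hsingle : coeff (2*n) ((S⁻¹)^(2*n+1))
        ≤ ∑ i ∈ Finset.range (2*n+1), coeff i ((S⁻¹)^(2*n+1)) :=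
      Finset.single_le_sum (fun i _ => hpn i) (Finset.mem_range.2 (by omega))
    linarith
  constructor
  · by_contra hdk
    push_neg at hdk
    have hlt : ((2*n+1:ℕ):ℝ) * d n < 0 := mul_neg_of_pos_of_neg (by positivity) hdk
    rw [hlag] at hlt
    linarith
  · rw [le_div_iff₀ (by positivity)]
    have hle1 : ((2*n+1:ℕ):ℝ) * d n ≤ 1 := by rw [hlag]; exact h02
    push_cast at hle1
    nlinarith [hle1]
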